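/- For every integer k and every real x, the following identity of formal power series in ℝ[[t]] holds: Lif_{k,p,q}(L(t)) · exp(−x·L(t)) = Σ_{n≥0} C_{n,p,q}^{(k)}(x) · t^n/n!, where L(t) = Σ_{n≥1} (−1)^{n−1} t^n/n is the formal logarithm log(1+t), so the left-hand side is Lif_{k,p,q}(log(1+t))·(1+t)^{−x}. -/

import Mathlib

open Finset

/-- The `(p,q)`-integer `[m]_{p,q} = (p^m - q^m)/(p - q)`. -/
noncomputable def pqInt (p q : ℝ) (m : ℕ) : ℝ := (p ^ m - q ^ m) / (p - q)

/-- The exponential generating function `∑ f n * t^n / n!` of a sequence `f`. -/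
noncomputable def egf (f : ℕ → ℝ) : PowerSeries ℝ :=
  PowerSeries.mk fun n => f n / n.factorial

/-- The unsigned Stirling numbers of the first kind, defined by the recurrence
`S1(n+1, m+1) = n * S1(n, m+1) + S1(n, m)`, so that
`x(x+1)⋯(x+n-1) = ∑_{m=0}^{n} S1(n,m) x^m`. -/
def stirling1 : ℕ → ℕ → ℕ
  | 0, 0 => 1
  | 0, _ + 1 => 0
  | _ + 1, 0 => 0
  | n + 1, m + 1 => n * stirling1 n (m + 1) + stirling1 n m

/-- The `(p,q)`-poly-Cauchy polynomials of the first kind. -/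
noncomputable def pqCauchy1 (p q : ℝ) (k : ℤ) (x : ℝ) (n : ℕ) : ℝ :=
  ∑ m ∈ Finset.range (n + 1),
    (-1 : ℝ) ^ (n - m) * (stirling1 n m : ℝ) *
      ∑ l ∈ Finset.range (m + 1),
        (m.choose l : ℝ) * (-x) ^ l / pqInt p q (m - l + 1) ^ k

/-- The `(p,q)`-poly-Cauchy polynomials of the second kind. -/
noncomputable def pqCauchy2 (p q : ℝ) (k : ℤ) (x : ℝ) (n : ℕ) : ℝ :=
  (-1 : ℝ) ^ n *
    ∑ m ∈ Finset.range (n + 1),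
      (stirling1 n m : ℝ) *
        ∑ l ∈ Finset.range (m + 1),
          (m.choose l : ℝ) * (-x) ^ l / pqInt p q (m - l + 1) ^ k

/-- Formal substitution of a power series `S` with zero constant term into the
`k`-th `(p,q)`-polylogarithm factorial function
`Lif_{k,p,q}(s) = ∑_{m ≥ 0} s^m / (m! [m+1]_{p,q}^k)`.
(For `m > n` the series `S^m` has zero `n`-th coefficient, so the sum is finite.) -/
noncomputable def pqLif (p q : ℝ) (k : ℤ) (S : PowerSeries ℝ) : PowerSeries ℝ :=
  PowerSeries.mk fun n =>
    ∑ m ∈ Finset.range (n + 1),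
      PowerSeries.coeff n (S ^ m) / ((m.factorial : ℝ) * pqInt p q (m + 1) ^ k)

/-- Formal substitution of a power series `S` with zero constant term into the
exponential series `exp(s) = ∑_{m ≥ 0} s^m / m!`. -/
noncomputable def expComp (S : PowerSeries ℝ) : PowerSeries ℝ :=
  PowerSeries.mk fun n =>
    ∑ m ∈ Finset.range (n + 1), PowerSeries.coeff n (S ^ m) / (m.factorial : ℝ)

/-- The formal logarithm `log(1 + t) = ∑_{n ≥ 1} (-1)^(n-1) t^n / n`. -/
noncomputable def logOnePlus : PowerSeries ℝ :=
  PowerSeries.mk fun n => if n = 0 then 0 else (-1 : ℝ) ^ (n - 1) / n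


section Aux
open PowerSeries

lemma constCoeff_L : PowerSeries.constantCoeff logOnePlus = 0 := by
  simp [logOnePlus]

lemma coeff_dL (n : ℕ) : PowerSeries.coeff n (d⁄dX ℝ logOnePlus) = (-1:ℝ)^n := by
  rw [PowerSeries.coeff_derivative]
  simp only [logOnePlus, PowerSeries.coeff_mk]
  rw [if_neg (Nat.succ_ne_zero n)]
  field_simp
  rw [Nat.add_sub_cancel]; push_cast; ring

lemma dL_mul : (d⁄dX ℝ logOnePlus) * (1 + PowerSeries.X) = 1 := by
  ext n
  rw [mul_add, mul_one, map_add]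
  cases n with
  | zero => simp [coeff_dL, PowerSeries.coeff_zero_mul_X]
  | succ n =>
    rw [PowerSeries.coeff_succ_mul_X, coeff_dL, coeff_dL, PowerSeries.coeff_one]
    simp [pow_succ]

lemma stirling1_eq_zero : ∀ {n m : ℕ}, n < m → stirling1 n m = 0
  | 0, _ + 1, _ => rfl
  | n + 1, m + 1, h => by
    rw [stirling1, stirling1_eq_zero (by omega), stirling1_eq_zero (by omega : n < m)]
    simp

noncomputable def Fs (n m : ℕ) : ℝ := (-1:ℝ)^(n-m) * stirling1 n m

lemma Fs_zero_of_lt {n m : ℕ} (h : n < m) : Fs n m = 0 := by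
  simp [Fs, stirling1_eq_zero h]

lemma Fs_rec (n m : ℕ) : Fs (n+1) (m+1) = -(n:ℝ) * Fs n (m+1) + Fs n m := by
  rcases lt_trichotomy n m with h | rfl | h
  · rw [Fs_zero_of_lt (Nat.succ_lt_succ h), Fs_zero_of_lt (Nat.lt_succ_of_lt h),
      Fs_zero_of_lt h]
    ring
  · rw [Fs_zero_of_lt (Nat.lt_succ_self n)]
    simp [Fs, stirling1, stirling1_eq_zero (Nat.lt_succ_self n)]
  · have h1 : m + 1 ≤ n := h
    simp only [Fs, stirling1]
    have e1 : n + 1 - (m + 1) = n - m := by omega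
    have e2 : n - m = (n - (m+1)) + 1 := by omega
    rw [e1, e2, pow_succ]
    push_cast
    ring

lemma coeff_L_pow' (m : ℕ) : ∀ n : ℕ, (n.factorial : ℝ) * PowerSeries.coeff n (logOnePlus ^ m)
    = Fs n m * m.factorial := by
  induction m with
  | zero =>
    intro n
    cases n with
    | zero => simp [Fs, stirling1]
    | succ n =>
      have : stirling1 (n+1) 0 = 0 := rfl
      simp [Fs, this, PowerSeries.coeff_one]
  | succ m ih =>
    have hD : (d⁄dX ℝ (logOnePlus ^ (m+1))) * (1 + PowerSeries.X)
        = ((m:ℝ)+1) • logOnePlus ^ m := by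
      rw [Derivation.leibniz_pow, Nat.add_sub_cancel, smul_eq_mul, smul_mul_assoc, mul_assoc,
        dL_mul, mul_one, ← Nat.cast_smul_eq_nsmul ℝ]
      push_cast
      ring_nf
    have key : ∀ n : ℕ, ((n:ℝ)+1) * PowerSeries.coeff (n+1) (logOnePlus^(m+1))
        + (n:ℝ) * PowerSeries.coeff n (logOnePlus^(m+1))
        = ((m:ℝ)+1) * PowerSeries.coeff n (logOnePlus^m) := by
      intro n
      have h := congrArg (PowerSeries.coeff n) hD
      rw [map_smul, smul_eq_mul, mul_add, mul_one, map_add, PowerSeries.coeff_derivative] at h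
      cases n with
      | zero =>
        rw [PowerSeries.coeff_zero_mul_X] at h
        push_cast at h ⊢
        linarith
      | succ j =>
        rw [PowerSeries.coeff_succ_mul_X, PowerSeries.coeff_derivative] at h
        push_cast at h ⊢
        linarith
    intro n
    induction n with
    | zero =>
      have h0 : PowerSeries.coeff 0 (logOnePlus ^ (m+1)) = 0 := by
        rw [PowerSeries.coeff_zero_eq_constantCoeff, map_pow, constCoeff_L,
          zero_pow (Nat.succ_ne_zero m)]
      rw [h0, Fs_zero_of_lt (Nat.succ_pos m)]
      simp
    | succ j ihn =>
      have hk := key j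
      have ihm := ih j
      have hfac : ((j+1).factorial : ℝ) = ((j:ℝ)+1) * (j.factorial : ℝ) := by
        rw [Nat.factorial_succ]; push_cast; ring
      have hfacm : ((m+1).factorial : ℝ) = ((m:ℝ)+1) * (m.factorial : ℝ) := by
        rw [Nat.factorial_succ]; push_cast; ring
      rw [hfacm] at ihn
      rw [Fs_rec, hfac, hfacm]
      linear_combination (j.factorial:ℝ) * hk + ((m:ℝ)+1) * ihm - (j:ℝ) * ihn

lemma coeff_L_pow (m n : ℕ) : PowerSeries.coeff n (logOnePlus ^ m)
    = Fs n m * m.factorial / n.factorial := by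
  have h := coeff_L_pow' m n
  have hn : (n.factorial : ℝ) ≠ 0 := Nat.cast_ne_zero.mpr n.factorial_ne_zero
  field_simp
  linarith [h]

lemma Fs_conv (a b n : ℕ) :
    ∑ p ∈ Finset.HasAntidiagonal.antidiagonal n,
      (Fs p.1 a * a.factorial / p.1.factorial) * (Fs p.2 b * b.factorial / p.2.factorial)
    = Fs n (a+b) * (a+b).factorial / n.factorial := by
  have h : PowerSeries.coeff n (logOnePlus ^ a * logOnePlus ^ b)
      = PowerSeries.coeff n (logOnePlus ^ (a+b)) := by rw [← pow_add]
  rw [PowerSeries.coeff_mul] at h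
  simp_rw [coeff_L_pow] at h
  exact h

end Aux

theorem pqPolyCauchy_first_kind_genFun
    (p q : ℝ) (hq : 0 < q) (hqp : q < p) (hp : p ≤ 1) (k : ℤ) (x : ℝ) :
    pqLif p q k logOnePlus * expComp ((-x) • logOnePlus) = egf (pqCauchy1 p q k x) := by
  have hPpos : ∀ a : ℕ, 0 < pqInt p q (a + 1) := by
    intro a
    have h1 : q ^ (a+1) < p ^ (a+1) := pow_lt_pow_left₀ hqp hq.le (Nat.succ_ne_zero a)
    exact div_pos (by linarith) (by linarith)
  have hP : ∀ a : ℕ, pqInt p q (a + 1) ^ k ≠ 0 := fun a => zpow_ne_zero k (hPpos a).ne'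
  ext n
  rw [PowerSeries.coeff_mul]
  set H : ℕ → ℕ → ℝ := fun a b =>
    Fs n (a+b) * ((a+b).factorial : ℝ) / n.factorial *
      ((-x)^b / ((a.factorial : ℝ) * pqInt p q (a+1) ^ k * b.factorial)) with hH
  have hA : ∀ i : ℕ, i ≤ n → PowerSeries.coeff i (pqLif p q k logOnePlus)
      = ∑ a ∈ Finset.range (n+1),
          Fs i a * a.factorial / i.factorial / ((a.factorial : ℝ) * pqInt p q (a+1) ^ k) := by
    intro i hi
    rw [pqLif, PowerSeries.coeff_mk]
    refine (Finset.sum_subset (Finset.range_subset_range.mpr (by omega)) ?_).trans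
      (Finset.sum_congr rfl ?_)
    · intro a _ ha
      rw [coeff_L_pow, Fs_zero_of_lt (by simp only [Finset.mem_range] at ha; omega)]
      simp
    · intro a _
      rw [coeff_L_pow]
  have hB : ∀ j : ℕ, j ≤ n → PowerSeries.coeff j (expComp ((-x) • logOnePlus))
      = ∑ b ∈ Finset.range (n+1),
          (-x)^b * (Fs j b * b.factorial / j.factorial) / (b.factorial : ℝ) := by
    intro j hj
    rw [expComp, PowerSeries.coeff_mk]
    refine (Finset.sum_subset (Finset.range_subset_range.mpr (by omega)) ?_).trans
      (Finset.sum_congr rfl ?_)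
    · intro b _ hb
      rw [smul_pow, map_smul, smul_eq_mul, coeff_L_pow,
        Fs_zero_of_lt (by simp only [Finset.mem_range] at hb; omega)]
      simp
    · intro b _
      rw [smul_pow, map_smul, smul_eq_mul, coeff_L_pow]
  calc ∑ p' ∈ Finset.HasAntidiagonal.antidiagonal n,
        PowerSeries.coeff p'.1 (pqLif p q k logOnePlus) *
          PowerSeries.coeff p'.2 (expComp ((-x) • logOnePlus))
      = ∑ p' ∈ Finset.HasAntidiagonal.antidiagonal n,
          (∑ a ∈ Finset.range (n+1),
            Fs p'.1 a * a.factorial / p'.1.factorial / ((a.factorial : ℝ) * pqInt p q (a+1) ^ k)) *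
          (∑ b ∈ Finset.range (n+1),
            (-x)^b * (Fs p'.2 b * b.factorial / p'.2.factorial) / (b.factorial : ℝ)) := by
        refine Finset.sum_congr rfl fun p' hp' => ?_
        have := Finset.HasAntidiagonal.mem_antidiagonal.mp hp'
        rw [hA p'.1 (by omega), hB p'.2 (by omega)]
    _ = ∑ a ∈ Finset.range (n+1), ∑ b ∈ Finset.range (n+1), H a b := by
        simp_rw [Finset.sum_mul_sum]
        rw [Finset.sum_comm]
        refine Finset.sum_congr rfl fun a _ => ?_
        rw [Finset.sum_comm]
        refine Finset.sum_congr rfl fun b _ => ?_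
        have hre : ∀ p' ∈ Finset.HasAntidiagonal.antidiagonal n,
            Fs p'.1 a * a.factorial / p'.1.factorial / ((a.factorial : ℝ) * pqInt p q (a+1) ^ k) *
              ((-x)^b * (Fs p'.2 b * b.factorial / p'.2.factorial) / (b.factorial : ℝ))
            = (Fs p'.1 a * a.factorial / p'.1.factorial) *
                (Fs p'.2 b * b.factorial / p'.2.factorial) *
              ((-x)^b / ((a.factorial : ℝ) * pqInt p q (a+1) ^ k * b.factorial)) := by
          intro p' _; ring
        rw [Finset.sum_congr rfl hre, ← Finset.sum_mul, Fs_conv]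
    _ = ∑ m ∈ Finset.range (n+1), ∑ l ∈ Finset.range (m+1), H (m - l) l := by
        have hvan : ∀ z : ℕ × ℕ, z ∈ (Finset.range (n+1)) ×ˢ (Finset.range (n+1)) →
            H z.1 z.2 ≠ 0 → z.1 + z.2 ≤ n := by
          intro z _ hz
          by_contra hle
          exact hz (by
            simp only [hH]
            rw [Fs_zero_of_lt (show n < z.1 + z.2 by omega)]
            ring)
        have hdisj : Set.PairwiseDisjoint ((Finset.range (n+1)) : Set ℕ)
            (fun m => (Finset.HasAntidiagonal.antidiagonal m : Finset (ℕ × ℕ))) := by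
          intro s _ t _ hst
          refine Finset.disjoint_left.mpr fun z hzs hzt => hst ?_
          exact (Finset.HasAntidiagonal.mem_antidiagonal.mp hzs).symm.trans (Finset.HasAntidiagonal.mem_antidiagonal.mp hzt)
        have hsub : ((Finset.range (n+1)) ×ˢ (Finset.range (n+1))).filter
            (fun z => z.1 + z.2 ≤ n)
            = (Finset.range (n+1)).biUnion (fun m => Finset.HasAntidiagonal.antidiagonal m) := by
          ext z
          simp only [Finset.mem_filter, Finset.mem_product, Finset.mem_range,
            Finset.mem_biUnion, Finset.HasAntidiagonal.mem_antidiagonal]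
          constructor
          · rintro ⟨⟨h1, h2⟩, h⟩; exact ⟨z.1 + z.2, by omega, rfl⟩
          · rintro ⟨m, hm, hz⟩; omega
        rw [← Finset.sum_product', ← Finset.sum_filter_of_ne hvan, hsub,
          Finset.sum_biUnion hdisj]
        refine Finset.sum_congr rfl fun m _ => ?_
        rw [Finset.Nat.sum_antidiagonal_eq_sum_range_succ (fun a b => H a b) m,
          ← Finset.sum_range_reflect (fun j => H j (m - j)) (m+1)]
        refine Finset.sum_congr rfl fun j hj => ?_
        simp only [Finset.mem_range] at hj
        congr 1 <;> omega
    _ = PowerSeries.coeff n (egf (pqCauchy1 p q k x)) := by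
        rw [egf, PowerSeries.coeff_mk, pqCauchy1, Finset.sum_div]
        refine Finset.sum_congr rfl fun m hm => ?_
        rw [Finset.mul_sum, Finset.sum_div]
        refine Finset.sum_congr rfl fun l hl => ?_
        simp only [Finset.mem_range] at hm hl
        have hml : m - l + l = m := by omega
        have hn0 : ((n.factorial : ℕ) : ℝ) ≠ 0 := Nat.cast_ne_zero.mpr n.factorial_ne_zero
        have h1 : (((m-l).factorial : ℕ) : ℝ) ≠ 0 := Nat.cast_ne_zero.mpr (m-l).factorial_ne_zero
        have h2 : ((l.factorial : ℕ) : ℝ) ≠ 0 := Nat.cast_ne_zero.mpr l.factorial_ne_zero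
        have hch : ((m.choose l : ℕ) : ℝ)
            = (m.factorial : ℝ) / (((m-l).factorial : ℝ) * (l.factorial : ℝ)) := by
          rw [eq_div_iff (mul_ne_zero h1 h2)]
          rw_mod_cast [← Nat.choose_mul_factorial_mul_factorial (by omega : l ≤ m)]
          push_cast
          ring
        simp only [hH, hml, Fs]
        rw [hch]
        field_simp
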